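/- Assume σ₁,...,σ_m are i.i.d. samples from the Mallows model MM(σ₀,φ) on S_n with φ < 1/2. If m ≥ (2/(1-2φ)²)·log(2n/δ), then with probability at least 1−δ, for every t ∈ {2,...,n} the median of the values σ_{k,S_t}(t) over k ∈ [m] equals σ_{0,S_t}(t), where S_t = {1,...,t}; consequently the LCA median-aggregation output equals σ₀. -/

import Mathlib

/-- Kendall tau distance between two permutations of `Fin n`. -/
def kendall {n : ℕ} (σ π : Equiv.Perm (Fin n)) : ℕ :=
  (Finset.univ.filter (fun p : Fin n × Fin n =>
    p.1 < p.2 ∧ ((σ p.1 < σ p.2 ∧ π p.2 < π p.1) ∨ (σ p.2 < σ p.1 ∧ π p.1 < π p.2)))).card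

/- Probability of the event `E` under the Mallows model `MM(σ₀, φ)`, in which a permutation
`σ` has probability proportional to `φ ^ d_τ(σ, σ₀)`. -/
open Classical in
noncomputable def mallowsProb {n : ℕ} (σ₀ : Equiv.Perm (Fin n)) (φ : ℝ)
    (E : Equiv.Perm (Fin n) → Prop) : ℝ :=
  (∑ σ : Equiv.Perm (Fin n), if E σ then φ ^ kendall σ σ₀ else 0) /
    (∑ σ : Equiv.Perm (Fin n), φ ^ kendall σ σ₀)

/-- The geometric sum `φ_{a:b} = φ^a + φ^{a+1} + ⋯ + φ^b` (equal to `0` if `a > b`). -/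
noncomputable def phiSum (φ : ℝ) (a b : ℕ) : ℝ := ∑ k ∈ Finset.Icc a b, φ ^ k

/-- One-based position of element `u` in the permutation `σ`. -/
def pos {n : ℕ} (σ : Equiv.Perm (Fin n)) (u : Fin n) : ℕ := (σ u : ℕ) + 1

/-- Projection rank of `x` within the subset `A` under `σ`. -/
def proj {n : ℕ} (σ : Equiv.Perm (Fin n)) (A : Finset (Fin n)) (x : Fin n) : ℕ :=
  (A.filter (fun y => σ y ≤ σ x)).card

/-- The median of `m` natural-number values: the smallest `v` such that at least `m/2` of the
values are `≤ v`. -/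
noncomputable def medianNat (m : ℕ) (v : Fin m → ℕ) : ℕ :=
  sInf {z : ℕ | m ≤ 2 * (Finset.univ.filter (fun k => v k ≤ z)).card}

instance {n : ℕ} : MeasurableSpace (Equiv.Perm (Fin n)) := ⊤

open MeasureTheory ProbabilityTheory

/- ######################################################################### -/
/- Auxiliary material for the proof -/

open Finset

namespace LCAaux

variable {n : ℕ}

lemma kendall_eq (σ π : Equiv.Perm (Fin n)) :
    kendall σ π = (Finset.univ.filter (fun p : Fin n × Fin n =>
      π p.1 < π p.2 ∧ σ p.2 < σ p.1)).card := by
  unfold kendall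
  apply Finset.card_nbij' (i := fun p : Fin n × Fin n => if π p.1 < π p.2 then p else (p.2, p.1))
    (j := fun q : Fin n × Fin n => if q.1 < q.2 then q else (q.2, q.1))
  · intro p hp
    simp only [Finset.mem_coe, mem_filter, mem_univ, true_and] at hp ⊢
    obtain ⟨h12, hd⟩ := hp
    rcases hd with ⟨hs, hp2⟩ | ⟨hs, hp2⟩
    · rw [if_neg (not_lt.2 hp2.le)]
      exact ⟨hp2, hs⟩
    · rw [if_pos hp2]
      exact ⟨hp2, hs⟩
  · intro q hq
    simp only [Finset.mem_coe, mem_filter, mem_univ, true_and] at hq ⊢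
    obtain ⟨hπ, hσ⟩ := hq
    by_cases h : q.1 < q.2
    · rw [if_pos h]
      exact ⟨h, Or.inr ⟨hσ, hπ⟩⟩
    · rw [if_neg h]
      have hne : q.1 ≠ q.2 := fun e => absurd hπ (by simp [e])
      have h21 : q.2 < q.1 := lt_of_le_of_ne (not_lt.1 h) (Ne.symm hne)
      exact ⟨h21, Or.inl ⟨hσ, hπ⟩⟩
  · intro p hp
    dsimp only
    simp only [Finset.mem_coe, mem_filter, mem_univ, true_and] at hp
    obtain ⟨h12, hd⟩ := hp
    rcases hd with ⟨hs, hp2⟩ | ⟨hs, hp2⟩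
    · rw [if_neg (not_lt.2 hp2.le), if_neg (not_lt.2 h12.le)]
    · rw [if_pos hp2, if_pos h12]
  · intro q hq
    dsimp only
    simp only [Finset.mem_coe, mem_filter, mem_univ, true_and] at hq
    obtain ⟨hπ, hσ⟩ := hq
    by_cases h : q.1 < q.2
    · rw [if_pos h]; rw [if_pos hπ]
    · rw [if_neg h]
      have hne : q.1 ≠ q.2 := fun e => absurd hπ (by simp [e])
      have h21 : q.2 < q.1 := lt_of_le_of_ne (not_lt.1 h) (Ne.symm hne)
      rw [if_neg (by simpa using not_lt.2 hπ.le)]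

lemma kendall_self (σ₀ : Equiv.Perm (Fin n)) : kendall σ₀ σ₀ = 0 := by
  unfold kendall
  rw [Finset.card_eq_zero, Finset.filter_eq_empty_iff]
  intro p _
  rintro ⟨h12, ⟨a, b⟩ | ⟨a, b⟩⟩ <;> exact absurd b (not_lt.2 a.le)

lemma one_le_Z (σ₀ : Equiv.Perm (Fin n)) {φ : ℝ} (hφ0 : 0 ≤ φ) :
    1 ≤ ∑ σ : Equiv.Perm (Fin n), φ ^ kendall σ σ₀ := by
  have := Finset.single_le_sum (f := fun σ : Equiv.Perm (Fin n) => φ ^ kendall σ σ₀)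
    (fun i _ => pow_nonneg hφ0 _) (Finset.mem_univ σ₀)
  simpa [kendall_self] using this

lemma kendall_rev (σ π : Equiv.Perm (Fin n)) :
    kendall (Fin.revPerm * σ) (Fin.revPerm * π) = kendall σ π := by
  unfold kendall
  congr 1
  apply Finset.filter_congr
  intro p _
  simp only [Equiv.Perm.mul_apply, Fin.revPerm_apply, Fin.rev_lt_rev, eq_iff_iff]
  tauto

lemma kendall_swap_lt (σ₀ σ : Equiv.Perm (Fin n)) (u w : Fin n)
    (h1 : σ₀ u < σ₀ w) (h2 : σ w < σ u)
    (hmax : ∀ y, σ₀ u < σ₀ y → σ y < σ u → σ y ≤ σ w) :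
    kendall (σ * Equiv.swap u w) σ₀ + 1 ≤ kendall σ σ₀ := by
  classical
  rw [kendall_eq, kendall_eq]
  have huw : u ≠ w := fun e => absurd h1 (by simp [e])
  set σ' := σ * Equiv.swap u w with hσ'
  have hsu : σ' u = σ w := by simp [hσ', Equiv.Perm.mul_apply]
  have hsw : σ' w = σ u := by simp [hσ', Equiv.Perm.mul_apply]
  have hso : ∀ x, x ≠ u → x ≠ w → σ' x = σ x := fun x hxu hxw => by
    simp [hσ', Equiv.Perm.mul_apply, Equiv.swap_apply_of_ne_of_ne hxu hxw]
  set R := Finset.univ.filter (fun p : Fin n × Fin n => σ₀ p.1 < σ₀ p.2 ∧ σ p.2 < σ p.1) with hR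
  set R' := Finset.univ.filter (fun p : Fin n × Fin n => σ₀ p.1 < σ₀ p.2 ∧ σ' p.2 < σ' p.1) with hR'
  have huwR : (u, w) ∈ R := by simp [hR, h1, h2]
  have key : R'.card ≤ (R.erase (u, w)).card := by
    apply Finset.card_le_card_of_injOn
      (fun p => if p.2 = u ∧ σ p.1 < σ u then (p.1, w) else p)
    · rintro ⟨x, y⟩ hp
      dsimp only
      simp only [Finset.mem_coe, hR', Finset.mem_filter, Finset.mem_univ, true_and] at hp
      obtain ⟨ha, hb⟩ := hp
      have hxy : x ≠ y := fun e => absurd ha (by simp [e])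
      by_cases hcase : y = u ∧ σ x < σ u
      · obtain ⟨hyu, hxlt⟩ := hcase
        subst y
        have hxu : x ≠ u := hxy
        have hxw : x ≠ w := by
          intro e; rw [e] at ha; exact absurd ha (not_lt.2 h1.le)
        rw [hsu, hso x hxu hxw] at hb
        rw [if_pos ⟨rfl, hxlt⟩]
        refine Finset.mem_erase.2 ⟨?_, ?_⟩
        · simp only [Ne, Prod.ext_iff, not_and]
          intro e; exact absurd e hxu
        · simp only [hR, Finset.mem_filter, Finset.mem_univ, true_and]
          exact ⟨lt_trans ha h1, hb⟩
      · rw [if_neg hcase]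
        by_cases hyu : y = u
        · subst y
          have hxu : x ≠ u := hxy
          have hxw : x ≠ w := by
            intro e; rw [e] at ha; exact absurd ha (not_lt.2 h1.le)
          rw [hsu, hso x hxu hxw] at hb
          have hnlt : ¬ σ x < σ u := fun hl => hcase ⟨rfl, hl⟩
          have : σ u < σ x := lt_of_le_of_ne (not_lt.1 hnlt)
            (fun e => hxu (σ.injective e.symm))
          refine Finset.mem_erase.2 ⟨?_, ?_⟩
          · simp only [Ne, Prod.ext_iff, not_and]
            intro _ e; exact absurd e huw
          · simp only [hR, Finset.mem_filter, Finset.mem_univ, true_and]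
            exact ⟨ha, this⟩
        · by_cases hxu : x = u
          · subst hxu
            have hyw : y ≠ w := by
              intro e; subst e
              rw [hsw, hsu] at hb
              exact absurd hb (not_lt.2 h2.le)
            rw [hsu, hso y hyu hyw] at hb
            refine Finset.mem_erase.2 ⟨?_, ?_⟩
            · simp only [Ne, Prod.ext_iff, not_and]
              intro _ e; exact absurd e hyw
            · simp only [hR, Finset.mem_filter, Finset.mem_univ, true_and]
              exact ⟨ha, lt_trans hb h2⟩
          · by_cases hyw : y = w
            · subst y
              have hxw : x ≠ w := hxy
              rw [hsw, hso x hxu hxw] at hb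
              refine Finset.mem_erase.2 ⟨?_, ?_⟩
              · simp only [Ne, Prod.ext_iff, not_and]
                intro e; exact absurd e hxu
              · simp only [hR, Finset.mem_filter, Finset.mem_univ, true_and]
                exact ⟨ha, lt_trans h2 hb⟩
            · by_cases hxw : x = w
              · subst x
                have hyu' : y ≠ u := hyu
                have hyw' : y ≠ w := fun e => hxy e.symm
                rw [hso y hyu' hyw', hsw] at hb
                have hyltw : σ y < σ w := by
                  by_contra hcon
                  have hwy : σ w < σ y := lt_of_le_of_ne (not_lt.1 hcon)
                    (fun e => hyw' (σ.injective e.symm))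
                  have := hmax y (lt_trans h1 ha) hb
                  exact absurd hwy (not_lt.2 this)
                refine Finset.mem_erase.2 ⟨?_, ?_⟩
                · simp only [Ne, Prod.ext_iff, not_and]
                  intro e; exact absurd e.symm huw
                · simp only [hR, Finset.mem_filter, Finset.mem_univ, true_and]
                  exact ⟨ha, hyltw⟩
              · rw [hso x hxu hxw, hso y hyu hyw] at hb
                refine Finset.mem_erase.2 ⟨?_, ?_⟩
                · simp only [Ne, Prod.ext_iff, not_and]
                  intro e; exact absurd e hxu
                · simp only [hR, Finset.mem_filter, Finset.mem_univ, true_and]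
                  exact ⟨ha, hb⟩
    · rintro ⟨x1, y1⟩ hp ⟨x2, y2⟩ hq h
      simp only [Finset.coe_filter, Set.mem_setOf_eq, Finset.mem_univ, true_and, hR'] at hp hq
      replace h : (if y1 = u ∧ σ x1 < σ u then (x1, w) else (x1, y1))
          = (if y2 = u ∧ σ x2 < σ u then (x2, w) else (x2, y2)) := h
      by_cases c1 : y1 = u ∧ σ x1 < σ u <;> by_cases c2 : y2 = u ∧ σ x2 < σ u
      · rw [if_pos c1, if_pos c2] at h
        obtain ⟨e1, -⟩ := Prod.ext_iff.1 h
        exact Prod.ext e1 (c1.1.trans c2.1.symm)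
      · rw [if_pos c1, if_neg c2] at h
        exfalso
        obtain ⟨hyu1, hlt1⟩ := c1
        have e1 : x2 = x1 := (congrArg Prod.fst h).symm
        have e2 : y2 = w := (congrArg Prod.snd h).symm
        subst x2
        subst y2
        obtain ⟨ha2, hb2⟩ := hq
        have hx1u : x1 ≠ u := by
          intro e; rw [e, hyu1] at hp; exact absurd hp.1 (lt_irrefl _)
        have hx1w : x1 ≠ w := by
          intro e; rw [e] at ha2; exact absurd ha2 (lt_irrefl _)
        rw [hsw, hso x1 hx1u hx1w] at hb2
        exact absurd hlt1 (not_lt.2 hb2.le)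
      · rw [if_neg c1, if_pos c2] at h
        exfalso
        obtain ⟨hyu2, hlt2⟩ := c2
        have e1 : x1 = x2 := congrArg Prod.fst h
        have e2 : y1 = w := congrArg Prod.snd h
        subst x1
        subst y1
        obtain ⟨ha1, hb1⟩ := hp
        have hx2u : x2 ≠ u := by
          intro e; rw [e, hyu2] at hq; exact absurd hq.1 (lt_irrefl _)
        have hx2w : x2 ≠ w := by
          intro e; rw [e] at ha1; exact absurd ha1 (lt_irrefl _)
        rw [hsw, hso x2 hx2u hx2w] at hb1
        exact absurd hlt2 (not_lt.2 hb1.le)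
      · rw [if_neg c1, if_neg c2] at h
        exact h
  have h3 := Finset.card_erase_of_mem huwR
  have hRpos : 1 ≤ R.card := Finset.card_pos.2 ⟨_, huwR⟩
  omega

noncomputable def pick (σ₀ σ : Equiv.Perm (Fin n)) (u : Fin n) : Fin n :=
  if h : ((Finset.univ.filter fun y => σ₀ u < σ₀ y ∧ σ y < σ u).image σ).Nonempty
  then σ.symm (Finset.max' _ h) else u

lemma pick_spec (σ₀ σ : Equiv.Perm (Fin n)) (u : Fin n)
    (hE : ∃ y, σ₀ u < σ₀ y ∧ σ y < σ u) :
    (σ₀ u < σ₀ (pick σ₀ σ u) ∧ σ (pick σ₀ σ u) < σ u) ∧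
      ∀ y, σ₀ u < σ₀ y → σ y < σ u → σ y ≤ σ (pick σ₀ σ u) := by
  classical
  unfold pick
  set C := Finset.univ.filter (fun y => σ₀ u < σ₀ y ∧ σ y < σ u) with hC
  have hCne : C.Nonempty := by
    obtain ⟨y, hy⟩ := hE
    exact ⟨y, by simp [hC, hy.1, hy.2]⟩
  have hne : (C.image σ).Nonempty := hCne.image σ
  rw [dif_pos hne]
  obtain ⟨y, hyC, hyeq⟩ := Finset.mem_image.1 (Finset.max'_mem _ hne)
  have hpick : σ.symm ((C.image σ).max' hne) = y := by rw [← hyeq]; simp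
  rw [hpick]
  simp only [hC, Finset.mem_filter, Finset.mem_univ, true_and] at hyC
  refine ⟨⟨hyC.1, hyC.2⟩, ?_⟩
  intro z hz1 hz2
  have hzmem : σ z ∈ C.image σ :=
    Finset.mem_image_of_mem σ (by simp [hC, hz1, hz2])
  calc σ z ≤ (C.image σ).max' hne := Finset.le_max' _ _ hzmem
    _ = σ y := hyeq.symm

noncomputable def rpick (σ₀ σ' : Equiv.Perm (Fin n)) (u : Fin n) : Fin n :=
  if h : ((Finset.univ.filter fun y => σ₀ u < σ₀ y ∧ σ' u < σ' y).image σ').Nonempty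
  then σ'.symm (Finset.min' _ h) else u

lemma rpick_swap (σ₀ σ : Equiv.Perm (Fin n)) (u w : Fin n)
    (h1 : σ₀ u < σ₀ w) (h2 : σ w < σ u)
    (hmax : ∀ y, σ₀ u < σ₀ y → σ y < σ u → σ y ≤ σ w) :
    rpick σ₀ (σ * Equiv.swap u w) u = w := by
  classical
  have huw : u ≠ w := fun e => absurd h1 (by simp [e])
  set σ' := σ * Equiv.swap u w with hσ'
  have hsu : σ' u = σ w := by simp [hσ', Equiv.Perm.mul_apply]
  have hsw : σ' w = σ u := by simp [hσ', Equiv.Perm.mul_apply]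
  have hso : ∀ x, x ≠ u → x ≠ w → σ' x = σ x := fun x hxu hxw => by
    simp [hσ', Equiv.Perm.mul_apply, Equiv.swap_apply_of_ne_of_ne hxu hxw]
  unfold rpick
  set C' := Finset.univ.filter (fun y => σ₀ u < σ₀ y ∧ σ' u < σ' y) with hC'
  have hwC : w ∈ C' := by
    simp only [hC', Finset.mem_filter, Finset.mem_univ, true_and]
    exact ⟨h1, by rw [hsu, hsw]; exact h2⟩
  have hne : (C'.image σ').Nonempty := ⟨σ' w, Finset.mem_image_of_mem _ hwC⟩
  rw [dif_pos hne]
  have hmin : (C'.image σ').min' hne = σ' w := by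
    refine le_antisymm (Finset.min'_le _ _ (Finset.mem_image_of_mem _ hwC)) ?_
    apply Finset.le_min'
    intro v hv
    obtain ⟨y, hyC, rfl⟩ := Finset.mem_image.1 hv
    simp only [hC', Finset.mem_filter, Finset.mem_univ, true_and] at hyC
    obtain ⟨hy1, hy2⟩ := hyC
    by_cases hyw : y = w
    · rw [hyw]
    · have hyu : y ≠ u := fun e => absurd hy1 (by simp [e])
      rw [hso y hyu hyw] at hy2 ⊢
      rw [hsu] at hy2
      rw [hsw]
      by_contra hcon
      have hlt : σ y < σ u := not_le.1 hcon
      exact absurd hy2 (not_lt.2 (hmax y hy1 hlt))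
  rw [hmin]
  simp

lemma sum_Eplus_le (σ₀ : Equiv.Perm (Fin n)) (u : Fin n) {φ : ℝ}
    (hφ0 : 0 ≤ φ) (hφ1 : φ ≤ 1) :
    ∑ σ ∈ Finset.univ.filter (fun σ : Equiv.Perm (Fin n) => ∃ y, σ₀ u < σ₀ y ∧ σ y < σ u),
        φ ^ kendall σ σ₀
      ≤ φ * ∑ σ : Equiv.Perm (Fin n), φ ^ kendall σ σ₀ := by
  classical
  set E := Finset.univ.filter
    (fun σ : Equiv.Perm (Fin n) => ∃ y, σ₀ u < σ₀ y ∧ σ y < σ u) with hE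
  set Φ : Equiv.Perm (Fin n) → Equiv.Perm (Fin n) :=
    fun σ => σ * Equiv.swap u (pick σ₀ σ u) with hΦ
  have hmemE : ∀ σ, σ ∈ E → ∃ y, σ₀ u < σ₀ y ∧ σ y < σ u := by
    intro σ hσ
    simpa [hE] using hσ
  have hstep : ∀ σ ∈ E, φ ^ kendall σ σ₀ ≤ φ * φ ^ kendall (Φ σ) σ₀ := by
    intro σ hσ
    obtain ⟨⟨hp1, hp2⟩, hpm⟩ := pick_spec σ₀ σ u (hmemE σ hσ)
    have hk := kendall_swap_lt σ₀ σ u _ hp1 hp2 hpm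
    calc φ ^ kendall σ σ₀ ≤ φ ^ (kendall (Φ σ) σ₀ + 1) :=
          pow_le_pow_of_le_one hφ0 hφ1 hk
      _ = φ * φ ^ kendall (Φ σ) σ₀ := by ring
  have hinj : ∀ σ1 ∈ E, ∀ σ2 ∈ E, Φ σ1 = Φ σ2 → σ1 = σ2 := by
    intro σ1 h1' σ2 h2' heq
    obtain ⟨⟨hp11, hp12⟩, hpm1⟩ := pick_spec σ₀ σ1 u (hmemE σ1 h1')
    obtain ⟨⟨hp21, hp22⟩, hpm2⟩ := pick_spec σ₀ σ2 u (hmemE σ2 h2')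
    have e1 := rpick_swap σ₀ σ1 u (pick σ₀ σ1 u) hp11 hp12 hpm1
    have e2 := rpick_swap σ₀ σ2 u (pick σ₀ σ2 u) hp21 hp22 hpm2
    replace heq : σ1 * Equiv.swap u (pick σ₀ σ1 u) = σ2 * Equiv.swap u (pick σ₀ σ2 u) := heq
    have hpp : pick σ₀ σ1 u = pick σ₀ σ2 u := by rw [← e1, ← e2, heq]
    rw [hpp] at heq
    exact mul_right_cancel heq
  calc ∑ σ ∈ E, φ ^ kendall σ σ₀
      ≤ ∑ σ ∈ E, φ * φ ^ kendall (Φ σ) σ₀ := Finset.sum_le_sum hstep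
    _ = φ * ∑ σ ∈ E, φ ^ kendall (Φ σ) σ₀ := by rw [Finset.mul_sum]
    _ = φ * ∑ τ ∈ E.image Φ, φ ^ kendall τ σ₀ := by rw [Finset.sum_image hinj]
    _ ≤ φ * ∑ τ : Equiv.Perm (Fin n), φ ^ kendall τ σ₀ := by
        refine mul_le_mul_of_nonneg_left ?_ hφ0
        refine Finset.sum_le_sum_of_subset_of_nonneg (Finset.subset_univ _) ?_
        intros
        positivity

lemma sum_Eminus_le (σ₀ : Equiv.Perm (Fin n)) (u : Fin n) {φ : ℝ}
    (hφ0 : 0 ≤ φ) (hφ1 : φ ≤ 1) :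
    ∑ σ ∈ Finset.univ.filter (fun σ : Equiv.Perm (Fin n) => ∃ y, σ₀ y < σ₀ u ∧ σ u < σ y),
        φ ^ kendall σ σ₀
      ≤ φ * ∑ σ : Equiv.Perm (Fin n), φ ^ kendall σ σ₀ := by
  classical
  set ρ₀ : Equiv.Perm (Fin n) := Fin.revPerm * σ₀ with hρ₀
  have base := sum_Eplus_le ρ₀ u hφ0 hφ1
  have reidx1 : ∑ σ ∈ Finset.univ.filter
      (fun σ : Equiv.Perm (Fin n) => ∃ y, σ₀ y < σ₀ u ∧ σ u < σ y), φ ^ kendall σ σ₀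
      = ∑ τ ∈ Finset.univ.filter
      (fun τ : Equiv.Perm (Fin n) => ∃ y, ρ₀ u < ρ₀ y ∧ τ y < τ u),
        φ ^ kendall τ ρ₀ := by
    apply Finset.sum_nbij' (i := fun σ => Fin.revPerm * σ) (j := fun τ => Fin.revPerm * τ)
    · intro σ hσ
      simp only [Finset.mem_filter, Finset.mem_univ, true_and] at hσ ⊢
      obtain ⟨y, hy1, hy2⟩ := hσ
      exact ⟨y, by simp [hρ₀, Equiv.Perm.mul_apply, Fin.rev_lt_rev, hy1],
        by simp [Equiv.Perm.mul_apply, Fin.rev_lt_rev, hy2]⟩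
    · intro τ hτ
      simp only [Finset.mem_filter, Finset.mem_univ, true_and] at hτ ⊢
      obtain ⟨y, hy1, hy2⟩ := hτ
      rw [hρ₀] at hy1
      simp only [Equiv.Perm.mul_apply, Fin.revPerm_apply, Fin.rev_lt_rev] at hy1 hy2
      exact ⟨y, hy1, by simpa [Equiv.Perm.mul_apply, Fin.rev_lt_rev] using hy2⟩
    · intro σ _
      ext x
      simp [Equiv.Perm.mul_apply]
    · intro τ _
      ext x
      simp [Equiv.Perm.mul_apply]
    · intro σ _
      rw [hρ₀, ← kendall_rev σ σ₀]
  have hrr : Fin.revPerm * ρ₀ = σ₀ := by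
    ext x
    simp [hρ₀, Equiv.Perm.mul_apply]
  have reidx2 : ∑ τ : Equiv.Perm (Fin n), φ ^ kendall τ ρ₀
      = ∑ σ : Equiv.Perm (Fin n), φ ^ kendall σ σ₀ := by
    apply Finset.sum_nbij' (i := fun τ => Fin.revPerm * τ) (j := fun σ => Fin.revPerm * σ)
    · intros; exact Finset.mem_univ _
    · intros; exact Finset.mem_univ _
    · intro σ _; ext x; simp [Equiv.Perm.mul_apply]
    · intro τ _; ext x; simp [Equiv.Perm.mul_apply]
    · intro τ _
      rw [← kendall_rev τ ρ₀, hrr]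
  rw [reidx1, ← reidx2]
  exact base

lemma proj_le_of_no_witness (σ₀ σ : Equiv.Perm (Fin n)) (u : Fin n)
    (hn : ∀ y, ¬(σ₀ u < σ₀ y ∧ σ y < σ u)) :
    proj σ (Finset.univ.filter (fun y => y ≤ u)) u
      ≤ proj σ₀ (Finset.univ.filter (fun y => y ≤ u)) u := by
  unfold proj
  apply Finset.card_le_card
  intro z hz
  simp only [Finset.mem_filter, Finset.mem_univ, true_and] at hz ⊢
  obtain ⟨hzu, hσz⟩ := hz
  refine ⟨hzu, ?_⟩
  by_contra hcon
  have h1 : σ₀ u < σ₀ z := not_le.1 hcon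
  have hzne : z ≠ u := fun e => absurd h1 (by simp [e])
  have : σ z < σ u := lt_of_le_of_ne hσz (fun e => hzne (σ.injective e))
  exact hn z ⟨h1, this⟩

lemma proj_ge_of_no_witness (σ₀ σ : Equiv.Perm (Fin n)) (u : Fin n)
    (hn : ∀ y, ¬(σ₀ y < σ₀ u ∧ σ u < σ y)) :
    proj σ₀ (Finset.univ.filter (fun y => y ≤ u)) u
      ≤ proj σ (Finset.univ.filter (fun y => y ≤ u)) u := by
  unfold proj
  apply Finset.card_le_card
  intro z hz
  simp only [Finset.mem_filter, Finset.mem_univ, true_and] at hz ⊢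
  obtain ⟨hzu, hσz⟩ := hz
  refine ⟨hzu, ?_⟩
  by_contra hcon
  have h1 : σ u < σ z := not_le.1 hcon
  have hzne : z ≠ u := fun e => absurd h1 (by simp [e])
  have : σ₀ z < σ₀ u := lt_of_le_of_ne hσz (fun e => hzne (σ₀.injective e))
  exact hn z ⟨this, h1⟩

lemma medianNat_eq {m : ℕ} (v : Fin m → ℕ) (v₀ : ℕ)
    (h1 : 2 * (Finset.univ.filter fun k => v₀ < v k).card < m)
    (h2 : 2 * (Finset.univ.filter fun k => v k < v₀).card < m) :
    medianNat m v = v₀ := by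
  unfold medianNat
  have hsplit : (Finset.univ.filter fun k => v k ≤ v₀).card
      + (Finset.univ.filter fun k => v₀ < v k).card = m := by
    have := Finset.card_filter_add_card_filter_not
      (s := (Finset.univ : Finset (Fin m))) (p := fun k => v k ≤ v₀)
    simp only [not_le, Finset.card_univ, Fintype.card_fin] at this
    exact this
  have hv₀mem : v₀ ∈ {z : ℕ | m ≤ 2 * (Finset.univ.filter (fun k => v k ≤ z)).card} := by
    simp only [Set.mem_setOf_eq]
    omega
  apply le_antisymm (Nat.sInf_le hv₀mem)
  apply le_csInf ⟨v₀, hv₀mem⟩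
  intro z hz
  simp only [Set.mem_setOf_eq] at hz
  by_contra hcon
  have hzlt : z < v₀ := not_le.1 hcon
  have hsub : (Finset.univ.filter fun k => v k ≤ z).card
      ≤ (Finset.univ.filter fun k => v k < v₀).card := by
    apply Finset.card_le_card
    intro k hk
    simp only [Finset.mem_filter, Finset.mem_univ, true_and] at hk ⊢
    omega
  omega

lemma card_le_self (ρ : Equiv.Perm (Fin n)) (x : Fin n) :
    (Finset.univ.filter fun y => ρ y ≤ ρ x).card = (ρ x : ℕ) + 1 := by
  have : (Finset.univ.filter fun y => ρ y ≤ ρ x).card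
      = (Finset.univ.filter fun v : Fin n => v ≤ ρ x).card := by
    apply Finset.card_nbij' (i := fun y => ρ y) (j := fun v => ρ.symm v)
    · intro a ha; simp only [Finset.mem_coe, Finset.mem_filter, Finset.mem_univ, true_and] at ha ⊢; exact ha
    · intro a ha; simp only [Finset.mem_coe, Finset.mem_filter, Finset.mem_univ, true_and] at ha ⊢; simpa using ha
    · intro a _; simp
    · intro a _; simp
  rw [this]
  have : (Finset.univ.filter fun v : Fin n => v ≤ ρ x) = Finset.Iic (ρ x) := by
    ext v; simp
  rw [this, Fin.card_Iic]

lemma perm_eq_of_proj_eq (ρ σ₀ : Equiv.Perm (Fin n))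
    (h : ∀ u : Fin n, proj ρ (Finset.univ.filter (fun y => y ≤ u)) u
      = proj σ₀ (Finset.univ.filter (fun y => y ≤ u)) u) : ρ = σ₀ := by
  classical
  -- key step
  have key : ∀ u : Fin n, (∀ y z : Fin n, y < u → z < u → (ρ y ≤ ρ z ↔ σ₀ y ≤ σ₀ z)) →
      ∀ y, y < u → (ρ y < ρ u ↔ σ₀ y < σ₀ u) := by
    intro u hIH y hyu
    set Qρ := Finset.univ.filter (fun z => z < u ∧ ρ z < ρ u) with hQρ
    set Qσ := Finset.univ.filter (fun z => z < u ∧ σ₀ z < σ₀ u) with hQσ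
    have hA : ∀ (τ : Equiv.Perm (Fin n)),
        ((Finset.univ.filter (fun y => y ≤ u)).filter (fun y => τ y ≤ τ u))
        = insert u (Finset.univ.filter (fun z => z < u ∧ τ z < τ u)) := by
      intro τ
      ext a
      simp only [Finset.mem_filter, Finset.mem_univ, true_and, Finset.mem_insert]
      constructor
      · rintro ⟨hau, hτ⟩
        rcases eq_or_lt_of_le hau with he | hlt
        · exact Or.inl he
        · refine Or.inr ⟨hlt, lt_of_le_of_ne hτ (fun e => (ne_of_lt hlt) (τ.injective e))⟩
      · rintro (he | ⟨hlt, hτ⟩)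
        · exact ⟨le_of_eq he, le_of_eq (congrArg τ he)⟩
        · exact ⟨le_of_lt hlt, le_of_lt hτ⟩
    have hcard : Qρ.card = Qσ.card := by
      have h1 := h u
      unfold proj at h1
      rw [hA ρ, hA σ₀, ← hQρ, ← hQσ] at h1
      rw [Finset.card_insert_of_notMem (by simp [hQρ]),
        Finset.card_insert_of_notMem (by simp [hQσ])] at h1
      omega
    have hRank : ∀ y, y < u → (Finset.univ.filter (fun z => z < u ∧ ρ z ≤ ρ y))
        = (Finset.univ.filter (fun z => z < u ∧ σ₀ z ≤ σ₀ y)) := by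
      intro y hy
      ext z
      simp only [Finset.mem_filter, Finset.mem_univ, true_and]
      constructor
      · rintro ⟨hzu, hz⟩; exact ⟨hzu, (hIH z y hzu hy).1 hz⟩
      · rintro ⟨hzu, hz⟩; exact ⟨hzu, (hIH z y hzu hy).2 hz⟩
    have hrank_iff : ∀ (τ : Equiv.Perm (Fin n)) (Q : Finset (Fin n)),
        Q = Finset.univ.filter (fun z => z < u ∧ τ z < τ u) →
        ∀ y, y < u →
        (τ y < τ u ↔ (Finset.univ.filter (fun z => z < u ∧ τ z ≤ τ y)).card ≤ Q.card) := by
      rintro τ Q rfl y hy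
      constructor
      · intro hlt
        apply Finset.card_le_card
        intro z hz
        simp only [Finset.mem_filter, Finset.mem_univ, true_and] at hz ⊢
        exact ⟨hz.1, lt_of_le_of_lt hz.2 hlt⟩
      · intro hle
        by_contra hcon
        have hne : y ≠ u := ne_of_lt hy
        have huy : τ u < τ y := lt_of_le_of_ne (not_lt.1 hcon)
          (fun e => hne (τ.injective e).symm)
        have hsub : insert y (Finset.univ.filter (fun z => z < u ∧ τ z < τ u))
            ⊆ Finset.univ.filter (fun z => z < u ∧ τ z ≤ τ y) := by
          intro z hz
          simp only [Finset.mem_insert, Finset.mem_filter, Finset.mem_univ, true_and] at hz ⊢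
          rcases hz with rfl | ⟨hz1, hz2⟩
          · exact ⟨hy, le_refl _⟩
          · exact ⟨hz1, le_of_lt (lt_trans hz2 huy)⟩
        have hnmem : y ∉ Finset.univ.filter (fun z => z < u ∧ τ z < τ u) := by
          simp only [Finset.mem_filter, Finset.mem_univ, true_and, not_and]
          intro _
          exact not_lt.2 huy.le
        have := Finset.card_le_card hsub
        rw [Finset.card_insert_of_notMem hnmem] at this
        omega
    have i1 := (hrank_iff ρ Qρ hQρ y hyu)
    have i2 := (hrank_iff σ₀ Qσ hQσ y hyu)
    rw [i1, i2, hRank y hyu, hcard]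
  -- full agreement by strong induction on the bound
  have agree : ∀ N : ℕ, ∀ y z : Fin n, (y : ℕ) ≤ N → (z : ℕ) ≤ N →
      (ρ y ≤ ρ z ↔ σ₀ y ≤ σ₀ z) := by
    intro N
    induction N with
    | zero =>
      intro y z hy hz
      have : y = z := Fin.ext (by omega)
      simp [this]
    | succ N ih =>
      intro y z hy hz
      by_cases hy' : (y : ℕ) ≤ N
      · by_cases hz' : (z : ℕ) ≤ N
        · exact ih y z hy' hz'
        · -- z has val N+1, y < z
          have hyz : y < z := by
            rw [Fin.lt_def]; omega
          have hk := key z (fun a b ha hb => ih a b (by rw [Fin.lt_def] at ha; omega)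
            (by rw [Fin.lt_def] at hb; omega)) y hyz
          have hne1 : ρ y ≠ ρ z := fun e => (ne_of_lt hyz) (ρ.injective e)
          have hne2 : σ₀ y ≠ σ₀ z := fun e => (ne_of_lt hyz) (σ₀.injective e)
          rw [hne1.le_iff_lt, hne2.le_iff_lt]
          exact hk
      · by_cases hz' : (z : ℕ) ≤ N
        · have hzy : z < y := by rw [Fin.lt_def]; omega
          have hk := key y (fun a b ha hb => ih a b (by rw [Fin.lt_def] at ha; omega)
            (by rw [Fin.lt_def] at hb; omega)) z hzy
          simpa [not_lt] using not_congr hk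
        · have : y = z := Fin.ext (by omega)
          simp [this]
  have horder : ∀ x y : Fin n, ρ y ≤ ρ x ↔ σ₀ y ≤ σ₀ x := by
    intro x y
    exact agree (max (x : ℕ) (y : ℕ)) y x (le_max_right _ _) (le_max_left _ _)
  apply Equiv.ext
  intro x
  have := card_le_self ρ x
  have h2 := card_le_self σ₀ x
  have hfeq : (Finset.univ.filter fun y => ρ y ≤ ρ x)
      = (Finset.univ.filter fun y => σ₀ y ≤ σ₀ x) := by
    ext y
    simp only [Finset.mem_filter, Finset.mem_univ, true_and]
    exact horder x y
  rw [hfeq] at this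
  have : (ρ x : ℕ) = (σ₀ x : ℕ) := by omega
  exact Fin.ext this

lemma pow_bound {p φ : ℝ} (hp0 : 0 ≤ p) (hpφ : p ≤ φ) (hφ0 : 0 < φ) (hφ : φ < 1/2)
    {j m : ℕ} (hj : m ≤ 2*j) (hjm : j ≤ m) :
    p^j * (1-p)^(m-j) ≤ (Real.sqrt (φ*(1-φ)))^m := by
  set s := Real.sqrt (φ*(1-φ)) with hs
  have hφ1 : φ ≤ 1 := by linarith
  have hs0 : 0 ≤ s := Real.sqrt_nonneg _
  have hs2 : s^2 = φ*(1-φ) := Real.sq_sqrt (by nlinarith)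
  have h1p : 0 ≤ 1 - p := by linarith
  have hps : p*(1-p) ≤ s^2 := by rw [hs2]; nlinarith
  have hple : p ≤ s := by
    rw [hs, Real.le_sqrt hp0 (by nlinarith)]
    nlinarith
  have hpj : p^j = p^(m-j) * p^(2*j-m) := by
    rw [← pow_add]
    congr 1
    omega
  calc p^j * (1-p)^(m-j) = (p*(1-p))^(m-j) * p^(2*j-m) := by
        rw [hpj, mul_pow]
        ring
    _ ≤ (s^2)^(m-j) * s^(2*j-m) := by
        apply mul_le_mul (pow_le_pow_left₀ (by nlinarith) hps _)
          (pow_le_pow_left₀ hp0 hple _) (pow_nonneg hp0 _)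
          (pow_nonneg (by positivity) _)
    _ = s^m := by
        rw [← pow_mul, ← pow_add]
        congr 1
        omega

lemma final_const {φ δ : ℝ} {n' m : ℕ} (hn : 1 ≤ n') (hφ0 : 0 < φ) (hφ : φ < 1/2)
    (hδ0 : 0 < δ) (hδ1 : δ < 1)
    (hm : (2 / (1 - 2 * φ) ^ 2) * Real.log (2 * n' / δ) ≤ (m : ℝ)) :
    (2 * Real.sqrt (φ*(1-φ)))^m ≤ δ / (2*n') := by
  set c := (1 - 2*φ)^2 with hc
  have hc0 : 0 < c := by rw [hc]; exact pow_pos (by linarith) 2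
  have hc1 : c < 1 := by nlinarith
  set a := 2 * Real.sqrt (φ*(1-φ)) with ha
  have ha0 : 0 < a := by
    have : 0 < φ*(1-φ) := by nlinarith
    positivity
  have ha2 : a^2 = 1 - c := by
    rw [ha, mul_pow, Real.sq_sqrt (by nlinarith)]
    ring
  have hn0 : (0:ℝ) < 2*n' := by positivity
  have hratio : (1:ℝ) < 2*n'/δ := by
    rw [lt_div_iff₀ hδ0]
    have : (1:ℝ) ≤ n' := by exact_mod_cast hn
    nlinarith
  have hL : 0 < Real.log (2*n'/δ) := Real.log_pos hratio
  set L := Real.log (2*n'/δ) with hLdef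
  have hmc : L ≤ (m:ℝ) * c / 2 := by
    have h2 : 2/c * L ≤ m := hm
    have h3 := mul_le_mul_of_nonneg_right h2 (le_of_lt (half_pos hc0))
    have h4 : 2/c * L * (c/2) = L := by field_simp
    rw [h4] at h3
    have h5 : (m:ℝ) * (c/2) = m*c/2 := by ring
    linarith
  have hloga : Real.log a ≤ -c/2 := by
    have h2 : 2 * Real.log a = Real.log (a^2) := by
      rw [Real.log_pow]; push_cast; ring
    have h3 : Real.log (a^2) ≤ a^2 - 1 := by
      have := Real.log_le_sub_one_of_pos (show (0:ℝ) < a^2 by positivity)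
      exact this
    rw [ha2] at h3
    rw [ha2] at h2
    linarith
  have key : (m:ℝ) * Real.log a ≤ Real.log (δ/(2*n')) := by
    have h4 : Real.log (δ/(2*n')) = -L := by
      rw [hLdef, ← Real.log_inv]
      congr 1
      field_simp
    rw [h4]
    have h5 : (m:ℝ) * Real.log a ≤ (m:ℝ) * (-c/2) :=
      mul_le_mul_of_nonneg_left hloga (Nat.cast_nonneg m)
    nlinarith
  calc a^m = Real.exp (Real.log (a^m)) := (Real.exp_log (by positivity)).symm
    _ = Real.exp ((m:ℝ) * Real.log a) := by rw [Real.log_pow]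
    _ ≤ Real.exp (Real.log (δ/(2*n'))) := Real.exp_le_exp.2 key
    _ = δ/(2*n') := Real.exp_log (by positivity)

lemma law_event (σ₀ : Equiv.Perm (Fin n)) {φ : ℝ} (hφ0 : 0 ≤ φ)
    {Ω : Type*} [MeasurableSpace Ω] (μ : Measure Ω) (Xk : Ω → Equiv.Perm (Fin n))
    (hXk : Measurable Xk)
    (hlawk : ∀ π, μ {ω | Xk ω = π} = ENNReal.ofReal (mallowsProb σ₀ φ (fun σ => σ = π)))
    (B : Finset (Equiv.Perm (Fin n))) :
    μ (Xk ⁻¹' ↑B) = ENNReal.ofReal ((∑ π ∈ B, φ ^ kendall π σ₀) /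
      (∑ σ : Equiv.Perm (Fin n), φ ^ kendall σ σ₀)) := by
  classical
  have hpoint : ∀ π : Equiv.Perm (Fin n), mallowsProb σ₀ φ (fun σ => σ = π)
      = φ ^ kendall π σ₀ / (∑ σ : Equiv.Perm (Fin n), φ ^ kendall σ σ₀) := by
    intro π
    rw [mallowsProb]
    congr 1
    classical
    classical
    have h := Finset.sum_ite_eq' Finset.univ π (fun σ => φ ^ kendall σ σ₀)
    rw [if_pos (Finset.mem_univ π)] at h
    convert h using 2 with x _
    by_cases hx : x = π
    · rw [if_pos hx, if_pos hx]
    · rw [if_neg hx, if_neg hx]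
  have hdecomp : Xk ⁻¹' ↑B = ⋃ π ∈ B, {ω | Xk ω = π} := by
    ext ω
    simp
  rw [hdecomp, measure_biUnion_finset ?hd ?hm]
  case hd =>
    intro π1 _ π2 _ hne
    simp only [Function.onFun]
    rw [Set.disjoint_left]
    intro ω h1 h2
    exact hne (h1.symm.trans h2 : _)
  case hm =>
    intro π _
    exact hXk (MeasurableSpace.measurableSet_top (s := {π}))
  rw [Finset.sum_congr rfl (fun π _ => by rw [hlawk π, hpoint π])]
  rw [← ENNReal.ofReal_sum_of_nonneg (fun π _ => div_nonneg (pow_nonneg hφ0 _)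
    (Finset.sum_nonneg fun σ _ => pow_nonneg hφ0 _))]
  rw [← Finset.sum_div]

lemma chernoff {m : ℕ} (σ₀ : Equiv.Perm (Fin n)) {φ : ℝ} (hφ0 : 0 < φ) (hφ : φ < 1/2)
    {Ω : Type*} [MeasurableSpace Ω] (μ : Measure Ω) [IsProbabilityMeasure μ]
    (X : Fin m → Ω → Equiv.Perm (Fin n)) (hmeas : ∀ k, Measurable (X k))
    (hindep : iIndepFun X μ)
    (B : Finset (Equiv.Perm (Fin n))) {p : ℝ} (hp0 : 0 ≤ p) (hp1 : p ≤ φ)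
    (hlawB : ∀ k, μ (X k ⁻¹' ↑B) = ENNReal.ofReal p) :
    μ {ω | m ≤ 2 * (Finset.univ.filter fun k => X k ω ∈ B).card}
      ≤ ENNReal.ofReal ((2 * Real.sqrt (φ*(1-φ)))^m) := by
  classical
  set s := Real.sqrt (φ*(1-φ)) with hs
  have hp1' : p ≤ 1 := by linarith
  have hlawC : ∀ k, μ (X k ⁻¹' (↑B)ᶜ) = ENNReal.ofReal (1-p) := by
    intro k
    rw [Set.preimage_compl, prob_compl_eq_one_sub (hmeas k MeasurableSpace.measurableSet_top), hlawB k]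
    rw [← ENNReal.ofReal_one, ← ENNReal.ofReal_sub _ hp0]
  set C : Finset (Fin m) → Fin m → Set (Equiv.Perm (Fin n)) :=
    fun T k => if k ∈ T then (↑B : Set _) else (↑B)ᶜ with hC
  set TT := (Finset.univ.powerset.filter (fun T : Finset (Fin m) => m ≤ 2 * T.card)) with hTT
  have hsub : {ω | m ≤ 2 * (Finset.univ.filter fun k => X k ω ∈ B).card}
      ⊆ ⋃ T ∈ TT, ⋂ k, X k ⁻¹' (C T k) := by
    intro ω hω
    simp only [Set.mem_setOf_eq] at hω
    have hTmem : (Finset.univ.filter fun k => X k ω ∈ B) ∈ TT := by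
      simp only [hTT, Finset.mem_filter, Finset.mem_powerset]
      exact ⟨Finset.subset_univ _, hω⟩
    refine Set.mem_biUnion hTmem ?_
    simp only [Set.mem_iInter, Set.mem_preimage, hC]
    intro k
    by_cases hk : X k ω ∈ B
    · rw [if_pos (by simp [hk])]
      exact hk
    · rw [if_neg (by simp [hk])]
      exact hk
  have hcardTT : TT.card ≤ 2^m := by
    calc TT.card ≤ (Finset.univ.powerset : Finset (Finset (Fin m))).card :=
          Finset.card_le_card (Finset.filter_subset _ _)
      _ = 2^m := by rw [Finset.card_powerset]; simp
  calc μ {ω | m ≤ 2 * (Finset.univ.filter fun k => X k ω ∈ B).card}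
      ≤ μ (⋃ T ∈ TT, ⋂ k, X k ⁻¹' (C T k)) := measure_mono hsub
    _ ≤ ∑ T ∈ TT, μ (⋂ k, X k ⁻¹' (C T k)) := measure_biUnion_finset_le TT _
    _ ≤ ∑ T ∈ TT, ENNReal.ofReal (s^m) := by
        apply Finset.sum_le_sum
        intro T hT
        simp only [hTT, Finset.mem_filter, Finset.mem_powerset] at hT
        have hTm : T.card ≤ m := by
          have := Finset.card_le_card hT.1
          simpa using this
        have hprod : μ (⋂ k, X k ⁻¹' (C T k)) = ∏ k, μ (X k ⁻¹' (C T k)) :=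
          hindep.meas_iInter (fun k => ⟨C T k, MeasurableSpace.measurableSet_top, rfl⟩)
        rw [hprod]
        have hterm : ∀ k, μ (X k ⁻¹' (C T k))
            = if k ∈ T then ENNReal.ofReal p else ENNReal.ofReal (1-p) := by
          intro k
          by_cases hk : k ∈ T
          · rw [hC]; simp only [if_pos hk]; exact hlawB k
          · rw [hC]; simp only [if_neg hk]; exact hlawC k
        rw [Finset.prod_congr rfl (fun k _ => hterm k)]
        rw [← Finset.prod_mul_prod_compl T]
        rw [Finset.prod_congr rfl (fun k hk => if_pos hk),
          Finset.prod_congr rfl (fun k hk => if_neg (Finset.mem_compl.1 hk))]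
        rw [Finset.prod_const, Finset.prod_const, Finset.card_compl]
        simp only [Fintype.card_fin]
        rw [← ENNReal.ofReal_pow hp0, ← ENNReal.ofReal_pow (by linarith),
          ← ENNReal.ofReal_mul (by positivity)]
        exact ENNReal.ofReal_le_ofReal (pow_bound hp0 hp1 hφ0 hφ hT.2 hTm)
    _ = (TT.card : ENNReal) * ENNReal.ofReal (s^m) := by
        rw [Finset.sum_const, nsmul_eq_mul]
    _ ≤ ((2^m : ℕ) : ENNReal) * ENNReal.ofReal (s^m) := by
        apply mul_le_mul_left
        exact_mod_cast hcardTT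
    _ = ENNReal.ofReal ((2*s)^m) := by
        have h2 : ((2^m : ℕ) : ENNReal) = ENNReal.ofReal ((2:ℝ)^m) := by
          rw [ENNReal.ofReal_pow (by norm_num)]
          norm_num
        rw [h2, ← ENNReal.ofReal_mul (by positivity), mul_pow]

end LCAaux

set_option maxHeartbeats 1000000 in
theorem lca_median_recovers_centroid {n m : ℕ} (σ₀ : Equiv.Perm (Fin n)) (φ δ : ℝ)
    (hφ0 : 0 < φ) (hφ : φ < 1 / 2) (hδ0 : 0 < δ) (hδ1 : δ < 1)
    (hm : (2 / (1 - 2 * φ) ^ 2) * Real.log (2 * n / δ) ≤ (m : ℝ))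
    {Ω : Type*} [MeasurableSpace Ω] (μ : Measure Ω) [IsProbabilityMeasure μ]
    (X : Fin m → Ω → Equiv.Perm (Fin n))
    (hmeas : ∀ k, Measurable (X k))
    (hindep : iIndepFun X μ)
    (hlaw : ∀ k π, μ {ω | X k ω = π} = ENNReal.ofReal (mallowsProb σ₀ φ (fun σ => σ = π))) :
    ENNReal.ofReal (1 - δ) ≤
      μ {ω | (∀ u : Fin n, 1 ≤ (u : ℕ) →
          medianNat m (fun k => proj (X k ω) (Finset.univ.filter (fun y => y ≤ u)) u) =
            proj σ₀ (Finset.univ.filter (fun y => y ≤ u)) u) ∧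
        ∀ ρ : Equiv.Perm (Fin n),
          (∀ u : Fin n, proj ρ (Finset.univ.filter (fun y => y ≤ u)) u =
            medianNat m (fun k => proj (X k ω) (Finset.univ.filter (fun y => y ≤ u)) u)) →
          ρ = σ₀} := by
  classical
  rcases Nat.eq_zero_or_pos n with hn0 | hn
  · subst hn0
    have hev : {ω : Ω | (∀ u : Fin 0, 1 ≤ (u : ℕ) →
          medianNat m (fun k => proj (X k ω) (Finset.univ.filter (fun y => y ≤ u)) u) =
            proj σ₀ (Finset.univ.filter (fun y => y ≤ u)) u) ∧
        ∀ ρ : Equiv.Perm (Fin 0),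
          (∀ u : Fin 0, proj ρ (Finset.univ.filter (fun y => y ≤ u)) u =
            medianNat m (fun k => proj (X k ω) (Finset.univ.filter (fun y => y ≤ u)) u)) →
          ρ = σ₀} = Set.univ := by
      ext ω
      simp only [Set.mem_setOf_eq, Set.mem_univ, iff_true]
      exact ⟨fun u => u.elim0, fun ρ _ => Subsingleton.elim ρ σ₀⟩
    rw [hev, measure_univ]
    exact ENNReal.ofReal_le_one.2 (by linarith)
  -- main case
  have hφ1 : φ ≤ 1 := by linarith
  set Z := ∑ σ : Equiv.Perm (Fin n), φ ^ kendall σ σ₀ with hZ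
  have hZ1 : (1:ℝ) ≤ Z := LCAaux.one_le_Z σ₀ hφ0.le
  have hZ0 : (0:ℝ) < Z := lt_of_lt_of_le one_pos hZ1
  have hratio : (1:ℝ) < 2 * n / δ := by
    rw [lt_div_iff₀ hδ0]
    have : (1:ℝ) ≤ (n:ℝ) := by exact_mod_cast hn
    nlinarith
  have hm1 : 1 ≤ m := by
    by_contra hcon
    have hm0 : m = 0 := by omega
    have hL : 0 < Real.log (2*n/δ) := Real.log_pos hratio
    have hc : (0:ℝ) < 2/(1-2*φ)^2 := by
      apply div_pos (by norm_num)
      exact pow_pos (by linarith) 2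
    rw [hm0] at hm
    push_cast at hm
    nlinarith
  set S : Fin n → Finset (Fin n) := fun u => Finset.univ.filter (fun y => y ≤ u) with hS
  set v₀ : Fin n → ℕ := fun u => proj σ₀ (S u) u with hv₀
  set Bp : Fin n → Finset (Equiv.Perm (Fin n)) := fun u =>
    Finset.univ.filter (fun σ => v₀ u < proj σ (S u) u) with hBp
  set Bm : Fin n → Finset (Equiv.Perm (Fin n)) := fun u =>
    Finset.univ.filter (fun σ => proj σ (S u) u < v₀ u) with hBm
  set pP : Fin n → ℝ := fun u => (∑ π ∈ Bp u, φ ^ kendall π σ₀) / Z with hpP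
  set pM : Fin n → ℝ := fun u => (∑ π ∈ Bm u, φ ^ kendall π σ₀) / Z with hpM
  have hnneg : ∀ (B : Finset (Equiv.Perm (Fin n))),
      0 ≤ (∑ π ∈ B, φ ^ kendall π σ₀) / Z :=
    fun B => div_nonneg (Finset.sum_nonneg fun π _ => pow_nonneg hφ0.le _) hZ0.le
  have hpP0 : ∀ u, 0 ≤ pP u := fun u => hnneg _
  have hpM0 : ∀ u, 0 ≤ pM u := fun u => hnneg _
  have hpPφ : ∀ u, pP u ≤ φ := by
    intro u
    rw [hpP, div_le_iff₀ hZ0]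
    refine le_trans (Finset.sum_le_sum_of_subset_of_nonneg ?_
      (fun π _ _ => pow_nonneg hφ0.le _)) (LCAaux.sum_Eplus_le σ₀ u hφ0.le hφ1)
    intro σ hσ
    simp only [hBp, Finset.mem_filter, Finset.mem_univ, true_and] at hσ ⊢
    by_contra hcon
    push_neg at hcon
    have hle : proj σ (S u) u ≤ v₀ u :=
      LCAaux.proj_le_of_no_witness σ₀ σ u
        (fun y hy => absurd hy.2 (not_lt.2 (hcon y hy.1)))
    exact absurd hσ (not_lt.2 hle)
  have hpMφ : ∀ u, pM u ≤ φ := by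
    intro u
    rw [hpM, div_le_iff₀ hZ0]
    refine le_trans (Finset.sum_le_sum_of_subset_of_nonneg ?_
      (fun π _ _ => pow_nonneg hφ0.le _)) (LCAaux.sum_Eminus_le σ₀ u hφ0.le hφ1)
    intro σ hσ
    simp only [hBm, Finset.mem_filter, Finset.mem_univ, true_and] at hσ ⊢
    by_contra hcon
    push_neg at hcon
    have hle : v₀ u ≤ proj σ (S u) u :=
      LCAaux.proj_ge_of_no_witness σ₀ σ u
        (fun y hy => absurd hy.2 (not_lt.2 (hcon y hy.1)))
    exact absurd hσ (not_lt.2 hle)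
  -- laws for the bad events
  have hlawP : ∀ u k, μ (X k ⁻¹' ↑(Bp u)) = ENNReal.ofReal (pP u) :=
    fun u k => LCAaux.law_event σ₀ hφ0.le μ (X k) (hmeas k) (hlaw k) (Bp u)
  have hlawM : ∀ u k, μ (X k ⁻¹' ↑(Bm u)) = ENNReal.ofReal (pM u) :=
    fun u k => LCAaux.law_event σ₀ hφ0.le μ (X k) (hmeas k) (hlaw k) (Bm u)
  -- bad events
  set bad : Fin n → Set Ω := fun u =>
    {ω | m ≤ 2 * (Finset.univ.filter fun k => X k ω ∈ Bp u).card}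
      ∪ {ω | m ≤ 2 * (Finset.univ.filter fun k => X k ω ∈ Bm u).card} with hbad
  have hfc : (2 * Real.sqrt (φ*(1-φ)))^m ≤ δ / (2*n) :=
    LCAaux.final_const hn hφ0 (by linarith) hδ0 hδ1 hm
  have hbadu : ∀ u, μ (bad u) ≤ ENNReal.ofReal (δ/(2*n)) + ENNReal.ofReal (δ/(2*n)) := by
    intro u
    refine le_trans (measure_union_le _ _) (add_le_add ?_ ?_)
    · exact le_trans (LCAaux.chernoff σ₀ hφ0 (by linarith) μ X hmeas hindep (Bp u)
        (hpP0 u) (hpPφ u) (hlawP u)) (ENNReal.ofReal_le_ofReal hfc)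
    · exact le_trans (LCAaux.chernoff σ₀ hφ0 (by linarith) μ X hmeas hindep (Bm u)
        (hpM0 u) (hpMφ u) (hlawM u)) (ENNReal.ofReal_le_ofReal hfc)
  set Bad : Set Ω := ⋃ u : Fin n, bad u with hBadDef
  have hBad : μ Bad ≤ ENNReal.ofReal δ := by
    calc μ Bad ≤ ∑' u : Fin n, μ (bad u) := measure_iUnion_le _
      _ = ∑ u : Fin n, μ (bad u) := tsum_fintype _
      _ ≤ ∑ u : Fin n, (ENNReal.ofReal (δ/(2*n)) + ENNReal.ofReal (δ/(2*n))) :=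
          Finset.sum_le_sum (fun u _ => hbadu u)
      _ = (n : ENNReal) * (ENNReal.ofReal (δ/(2*n)) + ENNReal.ofReal (δ/(2*n))) := by
          rw [Finset.sum_const, Finset.card_univ, Fintype.card_fin, nsmul_eq_mul]
      _ ≤ ENNReal.ofReal δ := by
          rw [← ENNReal.ofReal_add (by positivity) (by positivity)]
          rw [← ENNReal.ofReal_natCast n, ← ENNReal.ofReal_mul (Nat.cast_nonneg n)]
          apply ENNReal.ofReal_le_ofReal
          have hn' : (0:ℝ) < n := by exact_mod_cast hn
          have heq : (n:ℝ) * (δ/(2*n) + δ/(2*n)) = δ := by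
            field_simp
            ring
          rw [heq]
  have hincl : Badᶜ ⊆ {ω | (∀ u : Fin n, 1 ≤ (u : ℕ) →
          medianNat m (fun k => proj (X k ω) (Finset.univ.filter (fun y => y ≤ u)) u) =
            proj σ₀ (Finset.univ.filter (fun y => y ≤ u)) u) ∧
        ∀ ρ : Equiv.Perm (Fin n),
          (∀ u : Fin n, proj ρ (Finset.univ.filter (fun y => y ≤ u)) u =
            medianNat m (fun k => proj (X k ω) (Finset.univ.filter (fun y => y ≤ u)) u)) →
          ρ = σ₀} := by
    intro ω hω
    rw [hBadDef, Set.mem_compl_iff, Set.mem_iUnion] at hω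
    push_neg at hω
    have hcounts : ∀ u : Fin n,
        2 * (Finset.univ.filter fun k => v₀ u < proj (X k ω) (S u) u).card < m ∧
        2 * (Finset.univ.filter fun k => proj (X k ω) (S u) u < v₀ u).card < m := by
      intro u
      have h1 := hω u
      simp only [hbad, Set.mem_union, Set.mem_setOf_eq, not_or, not_le] at h1
      have e1 : (Finset.univ.filter fun k => X k ω ∈ Bp u)
          = (Finset.univ.filter fun k => v₀ u < proj (X k ω) (S u) u) := by
        apply Finset.filter_congr
        intro k _
        simp [hBp]
      have e2 : (Finset.univ.filter fun k => X k ω ∈ Bm u)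
          = (Finset.univ.filter fun k => proj (X k ω) (S u) u < v₀ u) := by
        apply Finset.filter_congr
        intro k _
        simp [hBm]
      rw [e1, e2] at h1
      exact h1
    have hmed : ∀ u : Fin n,
        medianNat m (fun k => proj (X k ω) (S u) u) = v₀ u := fun u =>
      LCAaux.medianNat_eq _ _ (hcounts u).1 (hcounts u).2
    constructor
    · intro u _
      exact hmed u
    · intro ρ hρ
      apply LCAaux.perm_eq_of_proj_eq
      intro u
      rw [hρ u]
      exact hmed u
  have htotal : (1:ENNReal) ≤ μ Badᶜ + μ Bad := by
    rw [← measure_univ (μ := μ)]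
    have huniv : (Set.univ : Set Ω) = Badᶜ ∪ Bad := (Set.compl_union_self Bad).symm
    rw [huniv]
    exact measure_union_le _ _
  calc ENNReal.ofReal (1 - δ) = 1 - ENNReal.ofReal δ := by
        rw [ENNReal.ofReal_sub _ hδ0.le, ENNReal.ofReal_one]
    _ ≤ 1 - μ Bad := tsub_le_tsub_left hBad 1
    _ ≤ μ Badᶜ := tsub_le_iff_right.2 htotal
    _ ≤ _ := measure_mono hincl
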